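/- Along any solution (x(t), y(t)) of the system ẋ = -y - (4/3)a x³ y, ẏ = x - (16/3)a x² y² + a x⁴ that stays in the region 3 + 4a x³ > 0, the functions u = x(1 + a x³)/(3(3 + 4a x³)^{4/3}) and v = y/(3(3 + 4a x³)^{4/3}) satisfy u̇ = -v and v̇ = u. -/

import Mathlib

/-- u = x(1+ax³)/(3(3+4ax³)^{4/3}), v = y/(3(3+4ax³)^{4/3}) linearizes
ẋ = -y-(4/3)ax³y, ẏ = x-(16/3)ax²y²+ax⁴ on the region 3+4ax³ > 0. -/
theorem stmt_15 (a : ℝ) (x y : ℝ → ℝ)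
    (hx : ∀ t, HasDerivAt x (-(y t) - (4/3) * a * (x t) ^ 3 * y t) t)
    (hy : ∀ t, HasDerivAt y
      (x t - (16/3) * a * (x t) ^ 2 * (y t) ^ 2 + a * (x t) ^ 4) t)
    (hpos : ∀ t, 3 + 4 * a * (x t) ^ 3 > 0) :
    ∀ t,
      HasDerivAt (fun s => x s * (1 + a * (x s) ^ 3) /
          (3 * (3 + 4 * a * (x s) ^ 3) ^ ((4:ℝ)/3)))
        (-(y t / (3 * (3 + 4 * a * (x t) ^ 3) ^ ((4:ℝ)/3)))) t ∧
      HasDerivAt (fun s => y s / (3 * (3 + 4 * a * (x s) ^ 3) ^ ((4:ℝ)/3)))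
        (x t * (1 + a * (x t) ^ 3) /
          (3 * (3 + 4 * a * (x t) ^ 3) ^ ((4:ℝ)/3))) t := by
  intro t
  have hxt := hx t
  have hyt := hy t
  have hwpos := hpos t
  set X := x t with hX
  set Y := y t with hY
  set X' : ℝ := -Y - 4/3 * a * X ^ 3 * Y with hX'
  set W : ℝ := 3 + 4 * a * X ^ 3 with hW
  set W' : ℝ := 4 * a * (3 * X ^ 2 * X') with hW'
  have hx3 : HasDerivAt (fun s => (x s) ^ 3) (3 * X ^ 2 * X') t := by
    have h := hxt.pow 3
    exact h.congr_deriv (by rw [hX]; norm_num)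
  have hw : HasDerivAt (fun s => 3 + 4 * a * (x s) ^ 3) W' t :=
    ((hx3.const_mul (4 * a)).const_add 3)
  have hD : HasDerivAt (fun s => (3 + 4 * a * (x s) ^ 3) ^ ((4:ℝ)/3))
      (W' * ((4:ℝ)/3) * W ^ ((4:ℝ)/3 - 1)) t :=
    by exact hw.rpow_const (Or.inr (show (1:ℝ) ≤ (4:ℝ)/3 by norm_num))
  have hDen : HasDerivAt (fun s => 3 * (3 + 4 * a * (x s) ^ 3) ^ ((4:ℝ)/3))
      (3 * (W' * ((4:ℝ)/3) * W ^ ((4:ℝ)/3 - 1))) t := hD.const_mul 3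
  have hWne : W ≠ 0 := ne_of_gt hwpos
  have hPpos : (0:ℝ) < W ^ ((1:ℝ)/3) := Real.rpow_pos_of_pos hwpos _
  set P : ℝ := W ^ ((1:ℝ)/3) with hP
  have hPne : P ≠ 0 := ne_of_gt hPpos
  have h43 : W ^ ((4:ℝ)/3) = W * P := by
    rw [hP, show (4:ℝ)/3 = 1 + 1/3 by norm_num, Real.rpow_add hwpos, Real.rpow_one]
  have h13 : W ^ ((4:ℝ)/3 - 1) = P := by
    rw [hP]; norm_num
  have hDenNe : 3 * W ^ ((4:ℝ)/3) ≠ 0 := by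
    rw [h43]
    positivity
  have hN : HasDerivAt (fun s => x s * (1 + a * (x s) ^ 3))
      (X' * (1 + a * X ^ 3) + X * (a * (3 * X ^ 2 * X'))) t :=
    hxt.mul ((hx3.const_mul a).const_add 1)
  constructor
  · have hu := hN.div hDen hDenNe
    refine hu.congr_deriv ?_
    rw [h43, h13, hW', hX']
    field_simp
    ring
  · have hv := hyt.div hDen hDenNe
    refine hv.congr_deriv ?_
    rw [h43, h13, hW', hX']
    field_simp
    ring
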